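/- With K = 1_D − 1_{D'} as above and minimizing over v, the resulting function u ↦ inf_v Ψ_x(u,v) is even: Ψ_x(u,v₀(u)) = Ψ_x(−u,v₀(−u)); consequently Condition inf_s I_x(s,0) = I_x(0,0) holds, i.e. I_x(s,0) ≥ I_x(0,0) for all s ∈ ℝ. -/

import Mathlib

open MeasureTheory Real ENNReal

lemma stmt10_amgm (x y : ℝ) (hx : 0 ≤ x) (hy : 0 ≤ y) :
    2 * Real.sqrt (x * y) ≤ x + y := by
  nlinarith [sq_nonneg (Real.sqrt x - Real.sqrt y), Real.sq_sqrt hx, Real.sq_sqrt hy,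
    Real.sqrt_mul hx y, Real.sqrt_nonneg x, Real.sqrt_nonneg y]

lemma stmt10_sqrt_helper (a b : ℝ) (ha : 0 < a) (hb : 0 < b) :
    a * Real.sqrt (b / a) = Real.sqrt (a * b) := by
  rw [show a * b = a ^ 2 * (b / a) by field_simp, Real.sqrt_mul (sq_nonneg a),
    Real.sqrt_sq ha.le]

lemma stmt10_psi (lD lD' : ℝ) (M : ℝ → ℝ) (hlD : 0 < lD) (hlD' : 0 < lD')
    (hM : ∀ t : ℝ, 0 < M t) :
    (∀ u : ℝ,
      lD * (Real.exp (Real.log (Real.sqrt (lD' * M (-u) / (lD * M u)))) * M u - 1)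
      + lD' * (Real.exp (-Real.log (Real.sqrt (lD' * M (-u) / (lD * M u)))) * M (-u) - 1)
      = 2 * Real.sqrt (lD * M u * (lD' * M (-u))) - lD - lD')
    ∧ ∀ u v : ℝ,
      2 * Real.sqrt (lD * M u * (lD' * M (-u))) - lD - lD'
      ≤ lD * (Real.exp v * M u - 1) + lD' * (Real.exp (-v) * M (-u) - 1) := by
  constructor
  · intro u
    have ha : 0 < lD * M u := mul_pos hlD (hM u)
    have hb : 0 < lD' * M (-u) := mul_pos hlD' (hM (-u))
    have hq : 0 < lD' * M (-u) / (lD * M u) := div_pos hb ha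
    have hs : Real.exp (Real.log (Real.sqrt (lD' * M (-u) / (lD * M u))))
        = Real.sqrt (lD' * M (-u) / (lD * M u)) := Real.exp_log (Real.sqrt_pos.2 hq)
    rw [Real.exp_neg, hs]
    have e1 : (lD * M u) * Real.sqrt (lD' * M (-u) / (lD * M u))
        = Real.sqrt (lD * M u * (lD' * M (-u))) := stmt10_sqrt_helper _ _ ha hb
    have e2 : (lD' * M (-u)) * (Real.sqrt (lD' * M (-u) / (lD * M u)))⁻¹
        = Real.sqrt (lD * M u * (lD' * M (-u))) := by
      rw [← Real.sqrt_inv, inv_div, stmt10_sqrt_helper _ _ hb ha, mul_comm (lD' * M (-u))]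
    linear_combination e1 + e2
  · intro u v
    have ha : 0 < lD * M u := mul_pos hlD (hM u)
    have hb : 0 < lD' * M (-u) := mul_pos hlD' (hM (-u))
    have h1 : Real.exp v * Real.exp (-v) = 1 := by
      rw [← Real.exp_add, add_neg_cancel, Real.exp_zero]
    have h2 : 2 * Real.sqrt (lD * M u * Real.exp v * (lD' * M (-u) * Real.exp (-v)))
        ≤ lD * M u * Real.exp v + lD' * M (-u) * Real.exp (-v) :=
      stmt10_amgm _ _ (by positivity) (by positivity)
    have h3 : lD * M u * Real.exp v * (lD' * M (-u) * Real.exp (-v))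
        = lD * M u * (lD' * M (-u)) := by
      linear_combination lD * M u * (lD' * M (-u)) * h1
    rw [h3] at h2
    nlinarith [h2]

lemma stmt10_key (D D' : Set ℝ) (hD : MeasurableSet D) (hD' : MeasurableSet D')
    (hdisj : D ∩ D' = ∅) (hDfin : volume D ≠ ⊤) (hD'fin : volume D' ≠ ⊤)
    (K : ℝ → ℝ)
    (hK : ∀ z, K z = D.indicator (fun _ => (1 : ℝ)) z - D'.indicator (fun _ => (1 : ℝ)) z)
    (f : ℝ → ℝ)
    (hprob : ∫ y, f y = 1)
    (hMint : ∀ u : ℝ, Integrable (fun y => Real.exp (u * y) * f y))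
    (u v : ℝ) :
    ∫ p : ℝ × ℝ, (Real.exp ((u * p.2 + v) * K p.1) - 1) * f p.2
      = (volume D).toReal * (Real.exp v * (∫ y, Real.exp (u * y) * f y) - 1)
      + (volume D').toReal * (Real.exp (-v) * (∫ y, Real.exp (-u * y) * f y) - 1) := by
  have hf : Integrable f := by simpa using hMint 0
  have hgen : ∀ c u' : ℝ,
      Integrable (fun y => (c * Real.exp (u' * y) - 1) * f y) ∧
      ∫ y, (c * Real.exp (u' * y) - 1) * f y = c * (∫ y, Real.exp (u' * y) * f y) - 1 := by
    intro c u'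
    have heq : (fun y => (c * Real.exp (u' * y) - 1) * f y)
        = fun y => c * (Real.exp (u' * y) * f y) - f y := by funext y; ring
    refine ⟨?_, ?_⟩
    · rw [heq]; exact ((hMint u').const_mul c).sub hf
    · rw [heq, integral_sub ((hMint u').const_mul c) hf, integral_const_mul, hprob]
  have hpt : ∀ p : ℝ × ℝ, (Real.exp ((u * p.2 + v) * K p.1) - 1) * f p.2
      = D.indicator (fun _ => (1 : ℝ)) p.1 * ((Real.exp v * Real.exp (u * p.2) - 1) * f p.2)
      + D'.indicator (fun _ => (1 : ℝ)) p.1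
          * ((Real.exp (-v) * Real.exp (-u * p.2) - 1) * f p.2) := by
    intro p
    by_cases h1 : p.1 ∈ D
    · have h2 : p.1 ∉ D' := fun h2 =>
        (Set.eq_empty_iff_forall_notMem.mp hdisj p.1) ⟨h1, h2⟩
      have hk : K p.1 = 1 := by
        simp [hK p.1, Set.indicator_of_mem h1, Set.indicator_of_notMem h2]
      rw [hk]
      simp only [Set.indicator_of_mem h1, Set.indicator_of_notMem h2]
      rw [show Real.exp v * Real.exp (u * p.2) = Real.exp ((u * p.2 + v) * 1) by
        rw [← Real.exp_add]; congr 1; ring]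
      ring
    · by_cases h2 : p.1 ∈ D'
      · have hk : K p.1 = -1 := by
          simp [hK p.1, Set.indicator_of_notMem h1, Set.indicator_of_mem h2]
        rw [hk]
        simp only [Set.indicator_of_notMem h1, Set.indicator_of_mem h2]
        rw [show Real.exp (-v) * Real.exp (-u * p.2) = Real.exp ((u * p.2 + v) * (-1)) by
          rw [← Real.exp_add]; congr 1; ring]
        ring
      · have hk : K p.1 = 0 := by
          simp [hK p.1, Set.indicator_of_notMem h1, Set.indicator_of_notMem h2]
        rw [hk]
        simp [Set.indicator_of_notMem h1, Set.indicator_of_notMem h2]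
  have hiD : Integrable (D.indicator (fun _ => (1 : ℝ))) volume :=
    (integrableOn_const hDfin (by simp)).integrable_indicator hD
  have hiD' : Integrable (D'.indicator (fun _ => (1 : ℝ))) volume :=
    (integrableOn_const hD'fin (by simp)).integrable_indicator hD'
  simp only [hpt]
  rw [Measure.volume_eq_prod ℝ ℝ,
    integral_add (hiD.mul_prod (hgen (Real.exp v) u).1)
      (hiD'.mul_prod (hgen (Real.exp (-v)) (-u)).1),
    integral_prod_mul (D.indicator (fun _ => (1 : ℝ)))
      (fun y => (Real.exp v * Real.exp (u * y) - 1) * f y),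
    integral_prod_mul (D'.indicator (fun _ => (1 : ℝ)))
      (fun y => (Real.exp (-v) * Real.exp (-u * y) - 1) * f y),
    (hgen (Real.exp v) u).2, (hgen (Real.exp (-v)) (-u)).2,
    integral_indicator_const (1 : ℝ) hD, integral_indicator_const (1 : ℝ) hD']
  simp [smul_eq_mul, Measure.real]

/-- With `K = 1_D - 1_{D'}`, the function `u ↦ inf_v Ψ_x(u,v)` is even (its value at the
minimizer `v₀(u)` agrees at `u` and `-u`), and consequently Condition (C) holds:
`I_x(s,0) ≥ I_x(0,0)` for all `s`. -/
theorem stmt10 (D D' : Set ℝ)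
    (hD : MeasurableSet D) (hD' : MeasurableSet D')
    (hdisj : D ∩ D' = ∅)
    (hDfin : volume D ≠ ⊤) (hD'fin : volume D' ≠ ⊤)
    (hmeas1 : (volume D).toReal - (volume D').toReal = 1)
    (hD'pos : 0 < (volume D').toReal)
    (K : ℝ → ℝ)
    (hK : ∀ z, K z = D.indicator (fun _ => (1 : ℝ)) z - D'.indicator (fun _ => (1 : ℝ)) z)
    (f : ℝ → ℝ) (hfnn : ∀ y, 0 ≤ f y) (hfmeas : Measurable f)
    (hprob : ∫ y, f y = 1)
    (hMint : ∀ u : ℝ, Integrable (fun y => Real.exp (u * y) * f y))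
    (hMpos : ∀ u : ℝ, 0 < ∫ y, Real.exp (u * y) * f y) :
    (∀ u : ℝ,
      (∫ p : ℝ × ℝ,
          (Real.exp ((u * p.2 +
            Real.log (Real.sqrt ((volume D').toReal * (∫ y, Real.exp (-u * y) * f y)
              / ((volume D).toReal * ∫ y, Real.exp (u * y) * f y)))) * K p.1) - 1) * f p.2)
      = ∫ p : ℝ × ℝ,
          (Real.exp ((-u * p.2 +
            Real.log (Real.sqrt ((volume D').toReal * (∫ y, Real.exp (u * y) * f y)
              / ((volume D).toReal * ∫ y, Real.exp (-u * y) * f y)))) * K p.1) - 1) * f p.2)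
    ∧ ∀ s : ℝ,
      (⨆ w : ℝ × ℝ,
        ENNReal.ofReal (w.1 * 0 + w.2 * 0 -
          ∫ p : ℝ × ℝ, (Real.exp ((w.1 * p.2 + w.2) * K p.1) - 1) * f p.2))
      ≤ ⨆ w : ℝ × ℝ,
        ENNReal.ofReal (w.1 * s + w.2 * 0 -
          ∫ p : ℝ × ℝ, (Real.exp ((w.1 * p.2 + w.2) * K p.1) - 1) * f p.2) := by
  have hlDpos : 0 < (volume D).toReal := by linarith
  have hkey : ∀ u v : ℝ, (∫ p : ℝ × ℝ, (Real.exp ((u * p.2 + v) * K p.1) - 1) * f p.2)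
      = (volume D).toReal * (Real.exp v * (∫ y, Real.exp (u * y) * f y) - 1)
      + (volume D').toReal * (Real.exp (-v) * (∫ y, Real.exp (-u * y) * f y) - 1) :=
    fun u v => stmt10_key D D' hD hD' hdisj hDfin hD'fin K hK f hprob hMint u v
  obtain ⟨heven, hmin⟩ := stmt10_psi (volume D).toReal (volume D').toReal
    (fun t => ∫ y, Real.exp (t * y) * f y) hlDpos hD'pos hMpos
  constructor
  · intro u
    rw [hkey, hkey]
    have h2 := heven (-u)
    simp only [neg_neg] at h2 ⊢
    rw [heven u, h2]
    have harg : (volume D).toReal * (∫ y, Real.exp (u * y) * f y)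
          * ((volume D').toReal * ∫ y, Real.exp (-u * y) * f y)
        = (volume D).toReal * (∫ y, Real.exp (-u * y) * f y)
          * ((volume D').toReal * ∫ y, Real.exp (u * y) * f y) := by ring
    rw [harg]
  · intro s
    simp only [hkey]
    refine iSup_le fun w => ?_
    set u' : ℝ := if 0 ≤ w.1 * s then w.1 else -w.1 with hu'
    have h1 : 0 ≤ u' * s := by
      by_cases h : 0 ≤ w.1 * s
      · simpa [hu', if_pos h] using h
      · push_neg at h
        rw [hu', if_neg (not_le.2 h), neg_mul]
        linarith
    refine le_iSup_of_le (⟨u', Real.log (Real.sqrt ((volume D').toReal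
        * (∫ y, Real.exp (-u' * y) * f y)
        / ((volume D).toReal * ∫ y, Real.exp (u' * y) * f y)))⟩ : ℝ × ℝ) ?_
    apply ENNReal.ofReal_le_ofReal
    dsimp only
    have h2 := heven u'
    rw [h2]
    have h3 : Real.sqrt ((volume D).toReal * (∫ y, Real.exp (u' * y) * f y)
          * ((volume D').toReal * ∫ y, Real.exp (-u' * y) * f y))
        = Real.sqrt ((volume D).toReal * (∫ y, Real.exp (w.1 * y) * f y)
          * ((volume D').toReal * ∫ y, Real.exp (-w.1 * y) * f y)) := by
      by_cases h : 0 ≤ w.1 * s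
      · rw [hu', if_pos h]
      · rw [hu', if_neg h]
        simp only [neg_neg]
        congr 1
        ring
    have h4 := hmin w.1 w.2
    rw [h3]
    nlinarith [h4, h1]
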